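/- Let K be a closed subset of [0,1]. (1) For every p ∈ (0,1], the functional X ↦ VaR_p(X) on L∞ is K-additive if and only if there exists a strictly increasing sequence (p_n)_{n∈ℕ} in K with p_n → p. (2) For every p ∈ [0,1), the functional X ↦ VaR⁺_p(X) on L∞ is K-additive if and only if there exists a strictly decreasing sequence (p_n)_{n∈ℕ} in K with p_n → p. -/

import Mathlib

open MeasureTheory Filter Set

section Defs

variable {Ω : Type*} [MeasurableSpace Ω]

/-- An atomless probability space: every event can be split to achieve any smaller measure
(Sierpiński's property, equivalent to atomlessness for probability measures). -/
def Atomless (P : Measure Ω) : Prop :=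
  ∀ A : Set Ω, MeasurableSet A → ∀ r : ENNReal, r ≤ P A →
    ∃ B : Set Ω, B ⊆ A ∧ MeasurableSet B ∧ P B = r

/-- `A` is a tail event for `X`: outside a null set, `X ω ≥ X ω'` for `ω ∈ A`, `ω' ∈ Aᶜ`. -/
def IsTailEvent (P : Measure Ω) (X : Ω → ℝ) (A : Set Ω) : Prop :=
  MeasurableSet A ∧ ∃ N : Set Ω, P N = 0 ∧
    ∀ ω ∈ A, ω ∉ N → ∀ ω' ∈ Aᶜ, ω' ∉ N → X ω' ≤ X ω

/-- `A` is a `p`-tail event for `X`: a tail event with `P A = 1 - p`. -/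
def IsPTailEvent (P : Measure Ω) (X : Ω → ℝ) (p : ℝ) (A : Set Ω) : Prop :=
  IsTailEvent P X A ∧ P A = ENNReal.ofReal (1 - p)

/-- A random vector is `p`-concentrated if a single event is a `p`-tail event for every
component. -/
def PConcentrated (P : Measure Ω) {d : ℕ} (X : Fin d → Ω → ℝ) (p : ℝ) : Prop :=
  ∃ A : Set Ω, ∀ i, IsPTailEvent P (X i) p A

/-- A random vector is `K`-concentrated if it is `p`-concentrated for every `p ∈ K`. -/
def KConcentrated (P : Measure Ω) {d : ℕ} (X : Fin d → Ω → ℝ) (K : Set ℝ) : Prop :=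
  ∀ p ∈ K, PConcentrated P X p

/-- Left quantile function `Q_X⁻(p) = inf {x | ℙ(X ≤ x) ≥ p}` (also `VaR_p`). -/
noncomputable def leftQuantile (P : Measure Ω) (X : Ω → ℝ) (p : ℝ) : ℝ :=
  sInf {x : ℝ | ENNReal.ofReal p ≤ P {ω | X ω ≤ x}}

/-- Right quantile function `Q_X⁺(p) = inf {x | ℙ(X ≤ x) > p}` (also `VaR⁺_p`). -/
noncomputable def rightQuantile (P : Measure Ω) (X : Ω → ℝ) (p : ℝ) : ℝ :=
  sInf {x : ℝ | ENNReal.ofReal p < P {ω | X ω ≤ x}}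

/-- `Q_X : [0,1] → ℝ`, equal to `Q_X⁺` at `0` and to `Q_X⁻` on `(0,1]`. -/
noncomputable def Q (P : Measure Ω) (X : Ω → ℝ) (p : ℝ) : ℝ :=
  if p = 0 then rightQuantile P X 0 else leftQuantile P X p

/-- Membership in L∞: essentially bounded (and measurable) random variables. -/
def MemLinf (P : Measure Ω) (X : Ω → ℝ) : Prop :=
  Measurable X ∧ ∃ C : ℝ, ∀ᵐ ω ∂P, |X ω| ≤ C

/-- A functional `ρ` on L∞ is `K`-additive if it is additive on every `K`-concentrated
random vector (of dimension `d ≥ 2`) with essentially bounded components. -/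
def KAdditive (P : Measure Ω) (K : Set ℝ) (ρ : (Ω → ℝ) → ℝ) : Prop :=
  ∀ d : ℕ, 2 ≤ d → ∀ X : Fin d → Ω → ℝ, (∀ i, MemLinf P (X i)) →
    KConcentrated P X K → ρ (∑ i, X i) = ∑ i, ρ (X i)

/-- A pair of random variables is comonotonic. -/
def ComonotonePair (P : Measure Ω) (X Z : Ω → ℝ) : Prop :=
  ∀ᵐ w ∂(P.prod P), 0 ≤ (X w.1 - X w.2) * (Z w.1 - Z w.2)

/-- A random vector is `g`-comonotonic: some random variable `Z` with quantile function `g`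
on `[0,1]` is comonotonic with every component. -/
def GComonotone (P : Measure Ω) {d : ℕ} (g : ℝ → ℝ) (X : Fin d → Ω → ℝ) : Prop :=
  ∃ Z : Ω → ℝ, Measurable Z ∧ (∀ p ∈ Icc (0:ℝ) 1, Q P Z p = g p) ∧
    ∀ i, ComonotonePair P (X i) Z

/-- A functional `ρ` on L∞ is `g`-additive if it is additive on every `g`-comonotonic
random vector (of dimension `d ≥ 2`) with essentially bounded components. -/
def GAdditive (P : Measure Ω) (g : ℝ → ℝ) (ρ : (Ω → ℝ) → ℝ) : Prop :=
  ∀ d : ℕ, 2 ≤ d → ∀ X : Fin d → Ω → ℝ, (∀ i, MemLinf P (X i)) →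
    GComonotone P g X → ρ (∑ i, X i) = ∑ i, ρ (X i)

/-- The distortion riskmetric `I_h`. -/
noncomputable def distortionRM (P : Measure Ω) (h : ℝ → ℝ) (X : Ω → ℝ) : ℝ :=
  (∫ x in Iio (0:ℝ), (h ((P {ω | x < X ω}).toReal) - h 1)) +
    ∫ x in Ioi (0:ℝ), h ((P {ω | x < X ω}).toReal)

/-- The spectral risk measure `ρ_g(X) = ∫₀¹ g(t) Q_X(t) dt`. -/
noncomputable def specRM (P : Measure Ω) (g : ℝ → ℝ) (X : Ω → ℝ) : ℝ :=
  ∫ t in (0:ℝ)..1, g t * Q P X t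

/-- Expected Shortfall at level `p`. -/
noncomputable def ES (P : Measure Ω) (p : ℝ) (X : Ω → ℝ) : ℝ :=
  (1 - p)⁻¹ * ∫ q in p..1, leftQuantile P X q

end Defs

/-- The class 𝒢 of increasing functions on `[0,1]`, right-continuous at `0` and
left-continuous on `(0,1]`. -/
def MemG (g : ℝ → ℝ) : Prop :=
  MonotoneOn g (Icc 0 1) ∧
    Tendsto g (nhdsWithin 0 (Ioi 0)) (nhds (g 0)) ∧
    ∀ p ∈ Ioc (0:ℝ) 1, Tendsto g (nhdsWithin p (Iio p)) (nhds (g p))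

/-- `p` is a point of strict increase on the right of `g`. -/
def IsPSIR (g : ℝ → ℝ) (p : ℝ) : Prop :=
  p ∈ Ico (0:ℝ) 1 ∧ ∀ s ∈ Ioc p 1, g p < g s

/-- `p` is a point of strict increase on the left of `g`. -/
def IsPSIL (g : ℝ → ℝ) (p : ℝ) : Prop :=
  p ∈ Ioc (0:ℝ) 1 ∧ ∀ s ∈ Ico (0:ℝ) p, g s < g p

/-- The set of points of strict increase of `g`. -/
def PSI (g : ℝ → ℝ) : Set ℝ :=
  {p | IsPSIR g p ∨ IsPSIL g p}

/-- `f ≾ g`: there is an increasing `h` with `f = h ∘ g` a.e. on `[0,1]`. -/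
def Prec (f g : ℝ → ℝ) : Prop :=
  ∃ h : ℝ → ℝ, Monotone h ∧
    ∀ᵐ t ∂(volume.restrict (Icc (0:ℝ) 1)), f t = h (g t)

/-- The map `𝒱 : K ↦ (p ↦ sup ((0,p) ∩ K))` (with `sup ∅ = 0`, the junk value of `sSup` in `ℝ`). -/
noncomputable def VK (K : Set ℝ) (p : ℝ) : ℝ :=
  sSup (Ioo (0:ℝ) p ∩ K)

/-- A risk spectrum: a nonnegative element of 𝒢 integrating to 1. -/
def IsRiskSpectrum (g : ℝ → ℝ) : Prop :=
  MemG g ∧ (∀ t ∈ Icc (0:ℝ) 1, 0 ≤ g t) ∧ (∫ t in (0:ℝ)..1, g t) = 1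

set_option linter.unusedSectionVars false
set_option linter.unusedVariables false
set_option maxHeartbeats 1000000

section MyHelpers

variable {Ω : Type*} [MeasurableSpace Ω] {P : Measure Ω} [IsProbabilityMeasure P]

lemma meas_le_of_ae_imp {s t : Set Ω} (h : ∀ᵐ ω ∂P, ω ∈ s → ω ∈ t) : P s ≤ P t := by
  calc P s ≤ P (t ∪ {ω | ¬(ω ∈ s → ω ∈ t)}) := by
        refine measure_mono fun ω hω => ?_
        by_cases h' : ω ∈ t
        · exact Or.inl h'
        · exact Or.inr (by simp [hω, h'])
    _ ≤ P t + P {ω | ¬(ω ∈ s → ω ∈ t)} := measure_union_le _ _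
    _ = P t := by rw [ae_iff.mp h, add_zero]

lemma prob_compl_ofReal {A : Set Ω} (hA : MeasurableSet A) {q : ℝ} (hq0 : 0 ≤ q)
    (hq1 : q ≤ 1) (h : P A = ENNReal.ofReal (1 - q)) : P Aᶜ = ENNReal.ofReal q := by
  rw [measure_compl hA (measure_ne_top _ _), h, measure_univ]
  rw [ENNReal.sub_eq_of_eq_add ENNReal.ofReal_ne_top]
  rw [← ENNReal.ofReal_add hq0 (by linarith), ← ENNReal.ofReal_one]
  ring_nf

lemma cdf_mono {X : Ω → ℝ} {x y : ℝ} (h : x ≤ y) :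
    P {ω | X ω ≤ x} ≤ P {ω | X ω ≤ y} :=
  measure_mono fun ω hω => le_trans hω h

lemma cdf_eq_one {X : Ω → ℝ} (hX : Measurable X) {C x : ℝ} (hC : ∀ᵐ ω ∂P, |X ω| ≤ C)
    (hx : C ≤ x) : P {ω | X ω ≤ x} = 1 := by
  rw [← prob_compl_eq_zero_iff (show MeasurableSet {ω | X ω ≤ x} from hX measurableSet_Iic)]
  refine measure_mono_null (fun ω hω => ?_) (ae_iff.mp hC)
  simp only [mem_compl_iff, mem_setOf_eq, not_le] at hω ⊢
  exact lt_of_le_of_lt hx (lt_of_lt_of_le hω (le_abs_self _))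

lemma cdf_eq_zero {X : Ω → ℝ} {C x : ℝ} (hC : ∀ᵐ ω ∂P, |X ω| ≤ C)
    (hx : x < -C) : P {ω | X ω ≤ x} = 0 := by
  refine measure_mono_null (fun ω hω => ?_) (ae_iff.mp hC)
  simp only [mem_setOf_eq, not_le] at hω ⊢
  have : X ω < -C := lt_of_le_of_lt hω hx
  have := neg_lt_neg this
  calc C < -X ω := by linarith
    _ ≤ |X ω| := neg_le_abs _


variable {Ω : Type*} [MeasurableSpace Ω] {P : Measure Ω} [IsProbabilityMeasure P]

lemma cdf_mono' {X : Ω → ℝ} {x y : ℝ} (h : x ≤ y) :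
    P {ω | X ω ≤ x} ≤ P {ω | X ω ≤ y} :=
  measure_mono fun ω hω => le_trans hω h

lemma le_cdf_sInf {X : Ω → ℝ} (hX : Measurable X) {c : ENNReal} {S : Set ℝ}
    (hS : ∀ x ∈ S, c ≤ P {ω | X ω ≤ x}) (hne : S.Nonempty) (hbd : BddBelow S) :
    c ≤ P {ω | X ω ≤ sInf S} := by
  set q := sInf S with hq
  have hset : {ω | X ω ≤ q} = ⋂ n : ℕ, {ω | X ω ≤ q + 1/(n+1)} := by
    ext ω
    simp only [mem_setOf_eq, mem_iInter]
    constructor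
    · intro h n
      have : (0:ℝ) < 1/(n+1) := by positivity
      linarith
    · intro h
      refine le_of_forall_pos_le_add fun ε hε => ?_
      obtain ⟨n, hn⟩ := exists_nat_one_div_lt hε
      have := h n
      have h2 : (1:ℝ)/(n+1) < ε := by exact_mod_cast hn
      linarith
  have hanti : Antitone (fun n : ℕ => {ω | X ω ≤ q + 1/(n+1)}) := by
    intro n m hnm ω hω
    simp only [mem_setOf_eq] at hω ⊢
    have h1 : (1:ℝ)/(m+1) ≤ 1/(n+1) := by
      apply one_div_le_one_div_of_le (by positivity)
      exact_mod_cast by omega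
    linarith
  have htend := tendsto_measure_iInter_atTop (μ := P)
    (s := fun n : ℕ => {ω | X ω ≤ q + 1/(n+1)})
    (fun n => (hX measurableSet_Iic).nullMeasurableSet) hanti ⟨0, measure_ne_top _ _⟩
  rw [hset]
  refine ge_of_tendsto htend (Eventually.of_forall fun n => ?_)
  have hlt : sInf S < q + 1/(n+1) := by
    rw [← hq]
    have : (0:ℝ) < 1/(n+1) := by positivity
    linarith
  obtain ⟨x, hxS, hxlt⟩ := exists_lt_of_csInf_lt hne hlt
  exact le_trans (hS x hxS) (cdf_mono' hxlt.le)

lemma cdf_lt_sInf_le {X : Ω → ℝ} (hX : Measurable X) {c : ENNReal}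
    (hbd : BddBelow {x : ℝ | c < P {ω | X ω ≤ x}}) :
    P {ω | X ω < sInf {x : ℝ | c < P {ω | X ω ≤ x}}} ≤ c := by
  set S := {x : ℝ | c < P {ω | X ω ≤ x}} with hS
  set q := sInf S with hq
  have hset : {ω | X ω < q} = ⋃ n : ℕ, {ω | X ω ≤ q - 1/(n+1)} := by
    ext ω
    simp only [mem_setOf_eq, mem_iUnion]
    constructor
    · intro h
      obtain ⟨n, hn⟩ := exists_nat_one_div_lt (show (0:ℝ) < q - X ω by linarith)
      have h2 : (1:ℝ)/(n+1) < q - X ω := by exact_mod_cast hn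
      exact ⟨n, by linarith⟩
    · rintro ⟨n, hn⟩
      have : (0:ℝ) < 1/(n+1) := by positivity
      linarith
  have hmono : Monotone (fun n : ℕ => {ω | X ω ≤ q - 1/(n+1)}) := by
    intro n m hnm ω hω
    simp only [mem_setOf_eq] at hω ⊢
    have h1 : (1:ℝ)/(m+1) ≤ 1/(n+1) := by
      apply one_div_le_one_div_of_le (by positivity)
      exact_mod_cast by omega
    linarith
  have htend := tendsto_measure_iUnion_atTop (μ := P)
    (s := fun n : ℕ => {ω | X ω ≤ q - 1/(n+1)}) hmono
  rw [hset]
  refine le_of_tendsto htend (Eventually.of_forall fun n => ?_)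
  by_contra hcon
  push_neg at hcon
  have hmem : q - 1/(n+1) ∈ S := hcon
  have := csInf_le hbd hmem
  rw [← hq] at this
  have : (0:ℝ) < 1/(n+1) := by positivity
  linarith [csInf_le hbd hmem, hq ▸ le_refl q]


variable {Ω : Type*} [MeasurableSpace Ω] {P : Measure Ω} [IsProbabilityMeasure P]

lemma prob_compl_ofReal' {A : Set Ω} (hA : MeasurableSet A) {q : ℝ} (hq0 : 0 ≤ q)
    (hq1 : q ≤ 1) (h : P A = ENNReal.ofReal (1 - q)) : P Aᶜ = ENNReal.ofReal q := by
  rw [measure_compl hA (measure_ne_top _ _), h, measure_univ]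
  rw [ENNReal.sub_eq_of_eq_add ENNReal.ofReal_ne_top]
  rw [← ENNReal.ofReal_add hq0 (by linarith), ← ENNReal.ofReal_one]
  ring_nf

lemma tail_upper {X : Ω → ℝ} (hX : Measurable X) {A N : Set Ω} (hA : MeasurableSet A)
    (hN : P N = 0)
    (htail : ∀ ω ∈ A, ω ∉ N → ∀ ω' ∈ Aᶜ, ω' ∉ N → X ω' ≤ X ω)
    {q : ℝ} (hq0 : 0 ≤ q) (hq1 : q ≤ 1) (hAP : P A = ENNReal.ofReal (1 - q))
    {v : ℝ} (hv : ENNReal.ofReal q ≤ P {ω | X ω ≤ v}) :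
    ∀ᵐ ω ∂P, ω ∈ Aᶜ → X ω ≤ v := by
  set N' := toMeasurable P N with hN'def
  have hN' : P N' = 0 := by rwa [measure_toMeasurable]
  have hNN' : N ⊆ N' := subset_toMeasurable _ _
  set E := (Aᶜ ∩ {ω | v < X ω}) \ N' with hEdef
  have hEmeas : MeasurableSet E :=
    (hA.compl.inter (hX measurableSet_Ioi)).diff (measurableSet_toMeasurable _ _)
  have hE0 : P E = 0 := by
    by_contra hE
    obtain ⟨ω', hω'⟩ : E.Nonempty :=
      nonempty_iff_ne_empty.2 (fun h => hE (by rw [h, measure_empty]))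
    have hsub : A \ N' ⊆ {ω | v < X ω} := fun ω hω =>
      lt_of_lt_of_le hω'.1.2
        (htail ω hω.1 (fun h => hω.2 (hNN' h)) ω' hω'.1.1 (fun h => hω'.2 (hNN' h)))
    have hd : Disjoint (A \ N') E :=
      Disjoint.mono diff_subset (fun ω hω => hω.1.1 : E ⊆ Aᶜ) disjoint_compl_right
    have h1 : P (A \ N') + P E ≤ P {ω | v < X ω} := by
      rw [← measure_union hd hEmeas]
      exact measure_mono (union_subset hsub (fun ω hω => hω.1.2))
    have hPAN : P (A \ N') = P A := measure_diff_null hN'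
    have h2 : P {ω | v < X ω} ≤ ENNReal.ofReal (1 - q) := by
      have hcs : {ω | v < X ω} = {ω | X ω ≤ v}ᶜ := by ext ω; simp [not_le]
      rw [hcs, measure_compl (s := {ω | X ω ≤ v}) (hX measurableSet_Iic) (measure_ne_top _ _), measure_univ]
      calc (1:ENNReal) - P {ω | X ω ≤ v} ≤ 1 - ENNReal.ofReal q := tsub_le_tsub_left hv 1
        _ = ENNReal.ofReal (1 - q) := by
            rw [← ENNReal.ofReal_one, ← ENNReal.ofReal_sub _ hq0]
    have h3 : ENNReal.ofReal (1-q) + P E ≤ ENNReal.ofReal (1-q) + 0 := by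
      rw [add_zero]
      calc ENNReal.ofReal (1-q) + P E = P (A \ N') + P E := by rw [hPAN, hAP]
        _ ≤ P {ω | v < X ω} := h1
        _ ≤ ENNReal.ofReal (1-q) := h2
    have h4 : P E ≤ 0 := ENNReal.le_of_add_le_add_left ENNReal.ofReal_ne_top h3
    exact hE (le_antisymm h4 (by positivity))
  refine ae_iff.2 (measure_mono_null (fun ω hω => ?_) (measure_union_null hE0 hN'))
  simp only [mem_setOf_eq] at hω
  push_neg at hω
  by_cases hmem : ω ∈ N'
  · exact Or.inr hmem
  · exact Or.inl ⟨⟨hω.1, hω.2⟩, hmem⟩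

lemma tail_lower {X : Ω → ℝ} (hX : Measurable X) {A N : Set Ω} (hA : MeasurableSet A)
    (hN : P N = 0)
    (htail : ∀ ω ∈ A, ω ∉ N → ∀ ω' ∈ Aᶜ, ω' ∉ N → X ω' ≤ X ω)
    {q : ℝ} (hq0 : 0 ≤ q) (hq1 : q ≤ 1) (hAP : P A = ENNReal.ofReal (1 - q))
    {v : ℝ} (hv : P {ω | X ω < v} ≤ ENNReal.ofReal q) :
    ∀ᵐ ω ∂P, ω ∈ A → v ≤ X ω := by
  set N' := toMeasurable P N with hN'def
  have hN' : P N' = 0 := by rwa [measure_toMeasurable]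
  have hNN' : N ⊆ N' := subset_toMeasurable _ _
  set E := (A ∩ {ω | X ω < v}) \ N' with hEdef
  have hEmeas : MeasurableSet E :=
    (hA.inter (hX measurableSet_Iio)).diff (measurableSet_toMeasurable _ _)
  have hE0 : P E = 0 := by
    by_contra hE
    obtain ⟨ω, hω⟩ : E.Nonempty :=
      nonempty_iff_ne_empty.2 (fun h => hE (by rw [h, measure_empty]))
    have hsub : Aᶜ \ N' ⊆ {ω' | X ω' < v} := fun ω' hω' =>
      lt_of_le_of_lt
        (htail ω hω.1.1 (fun h => hω.2 (hNN' h)) ω' hω'.1 (fun h => hω'.2 (hNN' h)))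
        hω.1.2
    have hd : Disjoint (Aᶜ \ N') E :=
      Disjoint.mono diff_subset (fun ω hω => hω.1.1 : E ⊆ A) disjoint_compl_left
    have h1 : P (Aᶜ \ N') + P E ≤ P {ω | X ω < v} := by
      rw [← measure_union hd hEmeas]
      exact measure_mono (union_subset hsub (fun ω hω => hω.1.2))
    have hPAN : P (Aᶜ \ N') = P Aᶜ := measure_diff_null hN'
    have hPAc : P Aᶜ = ENNReal.ofReal q := prob_compl_ofReal' hA hq0 hq1 hAP
    have h3 : ENNReal.ofReal q + P E ≤ ENNReal.ofReal q + 0 := by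
      rw [add_zero]
      calc ENNReal.ofReal q + P E = P (Aᶜ \ N') + P E := by rw [hPAN, hPAc]
        _ ≤ P {ω | X ω < v} := h1
        _ ≤ ENNReal.ofReal q := hv
    have h4 : P E ≤ 0 := ENNReal.le_of_add_le_add_left ENNReal.ofReal_ne_top h3
    exact hE (le_antisymm h4 (by positivity))
  refine ae_iff.2 (measure_mono_null (fun ω hω => ?_) (measure_union_null hE0 hN'))
  simp only [mem_setOf_eq] at hω
  push_neg at hω
  by_cases hmem : ω ∈ N'
  · exact Or.inr hmem
  · exact Or.inl ⟨⟨hω.1, hω.2⟩, hmem⟩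


variable {X : Ω → ℝ} {C : ℝ}

lemma mem_SL (hX : Measurable X) (hC : ∀ᵐ ω ∂P, |X ω| ≤ C) {t : ℝ} (ht : t ≤ 1) :
    C ∈ {x : ℝ | ENNReal.ofReal t ≤ P {ω | X ω ≤ x}} := by
  simp only [mem_setOf_eq, cdf_eq_one hX hC le_rfl]
  exact ENNReal.ofReal_le_one.2 ht

lemma bdd_SL (hC : ∀ᵐ ω ∂P, |X ω| ≤ C) {t : ℝ} (ht : 0 < t) :
    BddBelow {x : ℝ | ENNReal.ofReal t ≤ P {ω | X ω ≤ x}} := by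
  refine ⟨-C, fun x hx => ?_⟩
  by_contra hcon
  push_neg at hcon
  rw [mem_setOf_eq, cdf_eq_zero hC hcon] at hx
  exact absurd (lt_of_lt_of_le (ENNReal.ofReal_pos.2 ht) hx) (lt_irrefl _)

lemma mem_SR (hX : Measurable X) (hC : ∀ᵐ ω ∂P, |X ω| ≤ C) {t : ℝ} (ht : t < 1) :
    C ∈ {x : ℝ | ENNReal.ofReal t < P {ω | X ω ≤ x}} := by
  simp only [mem_setOf_eq, cdf_eq_one hX hC le_rfl]
  exact ENNReal.ofReal_lt_one.2 ht

lemma bdd_SR (hC : ∀ᵐ ω ∂P, |X ω| ≤ C) {t : ℝ} (ht : 0 ≤ t) :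
    BddBelow {x : ℝ | ENNReal.ofReal t < P {ω | X ω ≤ x}} := by
  refine ⟨-C, fun x hx => ?_⟩
  by_contra hcon
  push_neg at hcon
  rw [mem_setOf_eq, cdf_eq_zero hC hcon] at hx
  exact absurd hx (by simp)

end MyHelpers

section Main
variable {Ω : Type*} [MeasurableSpace Ω]

lemma kadd_left (P : Measure Ω) [IsProbabilityMeasure P]
    {K : Set ℝ} (hK : K ⊆ Icc 0 1) {p : ℝ} (hp : p ∈ Ioc (0:ℝ) 1)
    {u : ℕ → ℝ} (hu : StrictMono u) (huK : ∀ n, u n ∈ K)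
    (hut : Tendsto u atTop (nhds p)) :
    KAdditive P K (fun X => leftQuantile P X p) := by
  intro d hd X hX hconc
  have hup : ∀ n, u n < p := fun n =>
    lt_of_lt_of_le (hu (Nat.lt_succ_self n)) (hu.monotone.ge_of_tendsto hut (n+1))
  have hu0 : ∀ n, 0 ≤ u n := fun n => (hK (huK n)).1
  have hu1 : ∀ n, u n < 1 := fun n => lt_of_lt_of_le (hup n) hp.2
  choose C hC using fun i => (hX i).2
  have hXm : ∀ i, Measurable (X i) := fun i => (hX i).1
  set S : Ω → ℝ := ∑ i, X i with hSdef
  have hSapp : ∀ ω, S ω = ∑ i, X i ω := fun ω => by rw [hSdef]; exact Finset.sum_apply _ _ _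
  have hSm : Measurable S := by
    have he : S = fun ω => ∑ i, X i ω := funext hSapp
    rw [he]; exact Finset.measurable_sum _ (fun i _ => hXm i)
  set CS : ℝ := ∑ i, C i with hCSdef
  have hCS : ∀ᵐ ω ∂P, |S ω| ≤ CS := by
    filter_upwards [ae_all_iff.2 hC] with ω hω
    rw [hSapp]
    exact le_trans (Finset.abs_sum_le_sum_abs _ _) (Finset.sum_le_sum fun i _ => hω i)
  have i0 : Fin d := ⟨0, by omega⟩
  choose A hA using fun n => hconc (u n) (huK n)
  have hAm : ∀ n, MeasurableSet (A n) := fun n => (hA n i0).1.1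
  have hAP : ∀ n, P (A n) = ENNReal.ofReal (1 - u n) := fun n => (hA n i0).2
  set Qn : ℕ → Fin d → ℝ := fun n i => rightQuantile P (X i) (u n) with hQndef
  set Qp : Fin d → ℝ := fun i => leftQuantile P (X i) p with hQpdef
  have hQn_le_Qp : ∀ n i, Qn n i ≤ Qp i := by
    intro n i
    refine csInf_le_csInf (bdd_SR (hC i) (hu0 n)) ⟨C i, mem_SL (hXm i) (hC i) hp.2⟩
      fun x hx => ?_
    exact lt_of_lt_of_le ((ENNReal.ofReal_lt_ofReal_iff hp.1).2 (hup n)) hx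
  have hQn_mono : ∀ i, Monotone (fun n => Qn n i) := by
    intro i n m hnm
    refine csInf_le_csInf (bdd_SR (hC i) (hu0 n)) ⟨C i, mem_SR (hXm i) (hC i) (hu1 m)⟩
      fun x hx => ?_
    exact lt_of_le_of_lt (ENNReal.ofReal_le_ofReal (hu.monotone hnm)) hx
  have hF_Qn : ∀ n i, ENNReal.ofReal (u n) ≤ P {ω | X i ω ≤ Qn n i} := fun n i =>
    le_cdf_sInf (hXm i) (fun x hx => le_of_lt hx)
      ⟨C i, mem_SR (hXm i) (hC i) (hu1 n)⟩ (bdd_SR (hC i) (hu0 n))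
  have hlowF : ∀ n i, P {ω | X i ω < Qn n i} ≤ ENNReal.ofReal (u n) := fun n i =>
    cdf_lt_sInf_le (hXm i) (bdd_SR (hC i) (hu0 n))
  have hup_ae : ∀ n i, ∀ᵐ ω ∂P, ω ∈ (A n)ᶜ → X i ω ≤ Qn n i := by
    intro n i
    obtain ⟨⟨hAm', N, hN, htail⟩, hAP'⟩ := hA n i
    exact tail_upper (hXm i) hAm' hN htail (hu0 n) (hu1 n).le hAP' (hF_Qn n i)
  have hlo_ae : ∀ n i, ∀ᵐ ω ∂P, ω ∈ A n → Qn n i ≤ X i ω := by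
    intro n i
    obtain ⟨⟨hAm', N, hN, htail⟩, hAP'⟩ := hA n i
    exact tail_lower (hXm i) hAm' hN htail (hu0 n) (hu1 n).le hAP' (hlowF n i)
  set c : ℝ := ∑ i, Qp i with hcdef
  set cn : ℕ → ℝ := fun n => ∑ i, Qn n i with hcndef
  have hcn_le : ∀ n, cn n ≤ c := fun n => Finset.sum_le_sum (fun i _ => hQn_le_Qp n i)
  have hcompl : ∀ n, P (A n)ᶜ = ENNReal.ofReal (u n) := fun n =>
    prob_compl_ofReal' (hAm n) (hu0 n) (hu1 n).le (hAP n)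
  have h1 : ∀ n, ENNReal.ofReal (u n) ≤ P {ω | S ω ≤ cn n} := by
    intro n
    rw [← hcompl n]
    apply meas_le_of_ae_imp
    filter_upwards [ae_all_iff.2 (hup_ae n)] with ω hω hmem
    show S ω ≤ cn n
    rw [hSapp]
    exact Finset.sum_le_sum fun i _ => hω i hmem
  have h2 : ∀ n, P {ω | S ω < cn n} ≤ ENNReal.ofReal (u n) := by
    intro n
    rw [← hcompl n]
    apply meas_le_of_ae_imp
    filter_upwards [ae_all_iff.2 (hlo_ae n)] with ω hω hmem
    intro hAmem
    have hsum : cn n ≤ S ω := by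
      rw [hSapp]
      exact Finset.sum_le_sum fun i _ => hω i hAmem
    exact absurd (show S ω < cn n from hmem) (not_lt.2 hsum)
  have hofReal_t : Tendsto (fun n => ENNReal.ofReal (u n)) atTop (nhds (ENNReal.ofReal p)) :=
    (ENNReal.continuous_ofReal.tendsto p).comp hut
  have hLeq : ∀ i, Tendsto (fun n => Qn n i) atTop (nhds (Qp i)) := by
    intro i
    have hbdd : BddAbove (range fun n => Qn n i) :=
      ⟨Qp i, by rintro _ ⟨n, rfl⟩; exact hQn_le_Qp n i⟩
    have hL := tendsto_atTop_ciSup (hQn_mono i) hbdd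
    have hLle : (⨆ n, Qn n i) ≤ Qp i := ciSup_le (fun n => hQn_le_Qp n i)
    have hQple : Qp i ≤ ⨆ n, Qn n i := by
      refine csInf_le (bdd_SL (hC i) hp.1) ?_
      have hall : ∀ n, ENNReal.ofReal (u n) ≤ P {ω | X i ω ≤ ⨆ n, Qn n i} := fun n =>
        le_trans (hF_Qn n i) (cdf_mono' (le_ciSup hbdd n))
      exact le_of_tendsto hofReal_t (Eventually.of_forall hall)
    rwa [le_antisymm hLle hQple] at hL
  have hct : Tendsto cn atTop (nhds c) := by
    rw [hcndef, hcdef]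
    exact tendsto_finset_sum _ (fun i _ => hLeq i)
  have hmem_c : ENNReal.ofReal p ≤ P {ω | S ω ≤ c} := by
    refine le_of_tendsto hofReal_t (Eventually.of_forall fun n => ?_)
    exact le_trans (h1 n) (cdf_mono' (hcn_le n))
  have hle : leftQuantile P S p ≤ c := csInf_le (bdd_SL hCS hp.1) hmem_c
  have hge : c ≤ leftQuantile P S p := by
    refine le_of_tendsto hct (Eventually.of_forall fun n => ?_)
    refine le_csInf ⟨CS, mem_SL hSm hCS hp.2⟩ fun x hx => ?_
    by_contra hcon
    push_neg at hcon
    have hmono : P {ω | S ω ≤ x} ≤ P {ω | S ω < cn n} :=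
      measure_mono (fun ω hω => lt_of_le_of_lt hω hcon)
    have h5 := le_trans hx (le_trans hmono (h2 n))
    exact absurd (lt_of_lt_of_le ((ENNReal.ofReal_lt_ofReal_iff hp.1).2 (hup n)) h5)
      (lt_irrefl _)
  exact le_antisymm hle hge

lemma kadd_right (P : Measure Ω) [IsProbabilityMeasure P]
    {K : Set ℝ} (hK : K ⊆ Icc 0 1) {p : ℝ} (hp : p ∈ Ico (0:ℝ) 1)
    {u : ℕ → ℝ} (hu : StrictAnti u) (huK : ∀ n, u n ∈ K)
    (hut : Tendsto u atTop (nhds p)) :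
    KAdditive P K (fun X => rightQuantile P X p) := by
  intro d hd X hX hconc
  have hup : ∀ n, p < u n := fun n =>
    lt_of_le_of_lt (hu.antitone.le_of_tendsto hut (n+1)) (hu (Nat.lt_succ_self n))
  have hu1 : ∀ n, u n ≤ 1 := fun n => (hK (huK n)).2
  have hu0 : ∀ n, 0 < u n := fun n => lt_of_le_of_lt hp.1 (hup n)
  choose C hC using fun i => (hX i).2
  have hXm : ∀ i, Measurable (X i) := fun i => (hX i).1
  set S : Ω → ℝ := ∑ i, X i with hSdef
  have hSapp : ∀ ω, S ω = ∑ i, X i ω := fun ω => by rw [hSdef]; exact Finset.sum_apply _ _ _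
  have hSm : Measurable S := by
    have he : S = fun ω => ∑ i, X i ω := funext hSapp
    rw [he]; exact Finset.measurable_sum _ (fun i _ => hXm i)
  set CS : ℝ := ∑ i, C i with hCSdef
  have hCS : ∀ᵐ ω ∂P, |S ω| ≤ CS := by
    filter_upwards [ae_all_iff.2 hC] with ω hω
    rw [hSapp]
    exact le_trans (Finset.abs_sum_le_sum_abs _ _) (Finset.sum_le_sum fun i _ => hω i)
  have i0 : Fin d := ⟨0, by omega⟩
  choose A hA using fun n => hconc (u n) (huK n)
  have hAm : ∀ n, MeasurableSet (A n) := fun n => (hA n i0).1.1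
  have hAP : ∀ n, P (A n) = ENNReal.ofReal (1 - u n) := fun n => (hA n i0).2
  set Qn : ℕ → Fin d → ℝ := fun n i => leftQuantile P (X i) (u n) with hQndef
  set Qp : Fin d → ℝ := fun i => rightQuantile P (X i) p with hQpdef
  have hQp_le_Qn : ∀ n i, Qp i ≤ Qn n i := by
    intro n i
    refine csInf_le_csInf (bdd_SR (hC i) hp.1) ⟨C i, mem_SL (hXm i) (hC i) (hu1 n)⟩
      fun x hx => ?_
    exact lt_of_lt_of_le ((ENNReal.ofReal_lt_ofReal_iff (hu0 n)).2 (hup n)) hx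
  have hQn_anti : ∀ i, Antitone (fun n => Qn n i) := by
    intro i n m hnm
    refine csInf_le_csInf (bdd_SL (hC i) (hu0 m)) ⟨C i, mem_SL (hXm i) (hC i) (hu1 n)⟩
      fun x hx => ?_
    exact le_trans (ENNReal.ofReal_le_ofReal (hu.antitone hnm)) hx
  have hF_Qn : ∀ n i, ENNReal.ofReal (u n) ≤ P {ω | X i ω ≤ Qn n i} := fun n i =>
    le_cdf_sInf (hXm i) (fun x hx => hx)
      ⟨C i, mem_SL (hXm i) (hC i) (hu1 n)⟩ (bdd_SL (hC i) (hu0 n))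
  have hlowF : ∀ i, P {ω | X i ω < Qp i} ≤ ENNReal.ofReal p := fun i =>
    cdf_lt_sInf_le (hXm i) (bdd_SR (hC i) hp.1)
  have hup_ae : ∀ n i, ∀ᵐ ω ∂P, ω ∈ (A n)ᶜ → X i ω ≤ Qn n i := by
    intro n i
    obtain ⟨⟨hAm', N, hN, htail⟩, hAP'⟩ := hA n i
    exact tail_upper (hXm i) hAm' hN htail (hu0 n).le (hu1 n) hAP' (hF_Qn n i)
  have hlo_ae : ∀ n i, ∀ᵐ ω ∂P, ω ∈ A n → Qp i ≤ X i ω := by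
    intro n i
    obtain ⟨⟨hAm', N, hN, htail⟩, hAP'⟩ := hA n i
    exact tail_lower (hXm i) hAm' hN htail (hu0 n).le (hu1 n) hAP'
      (le_trans (hlowF i) (ENNReal.ofReal_le_ofReal (hup n).le))
  set c : ℝ := ∑ i, Qp i with hcdef
  set cn : ℕ → ℝ := fun n => ∑ i, Qn n i with hcndef
  have hc_le : ∀ n, c ≤ cn n := fun n => Finset.sum_le_sum (fun i _ => hQp_le_Qn n i)
  have hcompl : ∀ n, P (A n)ᶜ = ENNReal.ofReal (u n) := fun n =>
    prob_compl_ofReal' (hAm n) (hu0 n).le (hu1 n) (hAP n)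
  have h1 : ∀ n, ENNReal.ofReal (u n) ≤ P {ω | S ω ≤ cn n} := by
    intro n
    rw [← hcompl n]
    apply meas_le_of_ae_imp
    filter_upwards [ae_all_iff.2 (hup_ae n)] with ω hω hmem
    show S ω ≤ cn n
    rw [hSapp]
    exact Finset.sum_le_sum fun i _ => hω i hmem
  have h2 : ∀ n, P {ω | S ω < c} ≤ ENNReal.ofReal (u n) := by
    intro n
    rw [← hcompl n]
    apply meas_le_of_ae_imp
    filter_upwards [ae_all_iff.2 (hlo_ae n)] with ω hω hmem
    intro hAmem
    have hsum : c ≤ S ω := by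
      rw [hSapp]
      exact Finset.sum_le_sum fun i _ => hω i hAmem
    exact absurd (show S ω < c from hmem) (not_lt.2 hsum)
  have hofReal_t : Tendsto (fun n => ENNReal.ofReal (u n)) atTop (nhds (ENNReal.ofReal p)) :=
    (ENNReal.continuous_ofReal.tendsto p).comp hut
  have hLeq : ∀ i, Tendsto (fun n => Qn n i) atTop (nhds (Qp i)) := by
    intro i
    have hbdd : BddBelow (range fun n => Qn n i) :=
      ⟨Qp i, by rintro _ ⟨n, rfl⟩; exact hQp_le_Qn n i⟩
    have hL := tendsto_atTop_ciInf (hQn_anti i) hbdd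
    have hLge : Qp i ≤ ⨅ n, Qn n i := le_ciInf (fun n => hQp_le_Qn n i)
    have hLle : (⨅ n, Qn n i) ≤ Qp i := by
      refine le_csInf ⟨C i, mem_SR (hXm i) (hC i) hp.2⟩ fun x hx => ?_
      obtain ⟨n, hn⟩ := (hofReal_t.eventually_lt_const hx).exists
      exact le_trans (ciInf_le hbdd n) (csInf_le (bdd_SL (hC i) (hu0 n)) hn.le)
    rwa [le_antisymm hLle hLge] at hL
  have hct : Tendsto cn atTop (nhds c) := by
    rw [hcndef, hcdef]
    exact tendsto_finset_sum _ (fun i _ => hLeq i)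
  have hle : rightQuantile P S p ≤ c := by
    refine ge_of_tendsto hct (Eventually.of_forall fun n => ?_)
    refine csInf_le (bdd_SR hCS hp.1) ?_
    exact lt_of_lt_of_le ((ENNReal.ofReal_lt_ofReal_iff (hu0 n)).2 (hup n)) (h1 n)
  have hge : c ≤ rightQuantile P S p := by
    refine le_csInf ⟨CS, mem_SR hSm hCS hp.2⟩ fun x hx => ?_
    by_contra hcon
    push_neg at hcon
    have hmono : P {ω | S ω ≤ x} ≤ P {ω | S ω < c} :=
      measure_mono (fun ω hω => lt_of_le_of_lt hω hcon)
    have h5 : P {ω | S ω ≤ x} ≤ ENNReal.ofReal p :=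
      ge_of_tendsto hofReal_t (Eventually.of_forall fun n => le_trans hmono (h2 n))
    exact absurd (lt_of_lt_of_le hx h5) (lt_irrefl _)
  exact le_antisymm hle hge

lemma construction (P : Measure Ω) [IsProbabilityMeasure P] (hP : Atomless P)
    {K : Set ℝ} (hK : K ⊆ Icc 0 1) {α β : ℝ} (h0 : 0 ≤ α) (hαβ : α < β) (hβ : β ≤ 1)
    (hdich : ∀ q ∈ K, q ≤ α ∨ β ≤ q) :
    ∃ X : Fin 2 → Ω → ℝ, (∀ i, MemLinf P (X i)) ∧ KConcentrated P X K ∧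
      (∀ i x, 1 ≤ x → P {ω | X i ω ≤ x} = 1) ∧
      (∀ i x, x < 1 → P {ω | X i ω ≤ x} ≤ ENNReal.ofReal ((α+β)/2)) ∧
      (∀ i x, x < 0 → P {ω | X i ω ≤ x} = 0) ∧
      (∀ i x, 0 ≤ x → ENNReal.ofReal ((α+β)/2) ≤ P {ω | X i ω ≤ x}) ∧
      (P {ω | (∑ i, X i) ω ≤ 1} = ENNReal.ofReal β) ∧
      (∀ x, x < 1 → P {ω | (∑ i, X i) ω ≤ x} ≤ ENNReal.ofReal α) := by
  obtain ⟨T, -, hTm, hTP⟩ := hP univ MeasurableSet.univ (ENNReal.ofReal (1-β))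
    (by rw [measure_univ]; exact ENNReal.ofReal_le_one.2 (by linarith))
  have hTc : P Tᶜ = ENNReal.ofReal β := prob_compl_ofReal' hTm (by linarith) hβ hTP
  obtain ⟨B, hBT, hBm, hBP⟩ := hP Tᶜ hTm.compl (ENNReal.ofReal (β-α))
    (by rw [hTc]; exact ENNReal.ofReal_le_ofReal (by linarith))
  obtain ⟨B1, hB1B, hB1m, hB1P⟩ := hP B hBm (ENNReal.ofReal ((β-α)/2))
    (by rw [hBP]; exact ENNReal.ofReal_le_ofReal (by linarith))
  set B2 := B \ B1 with hB2def
  have hB2m : MeasurableSet B2 := hBm.diff hB1m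
  have hB2P : P B2 = ENNReal.ofReal ((β-α)/2) := by
    rw [hB2def, measure_diff hB1B hB1m.nullMeasurableSet (measure_ne_top _ _), hBP, hB1P,
      ← ENNReal.ofReal_sub _ (by linarith)]
    congr 1; ring
  have hTB_disj : Disjoint T B := disjoint_compl_right.mono_right hBT
  have hTBm : MeasurableSet (T ∪ B) := hTm.union hBm
  have hTBP : P (T ∪ B) = ENNReal.ofReal (1 - α) := by
    rw [measure_union hTB_disj hBm, hTP, hBP,
      ← ENNReal.ofReal_add (by linarith) (by linarith)]
    congr 1; ring
  set R := (T ∪ B)ᶜ with hRdef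
  have hRm : MeasurableSet R := hTBm.compl
  have hRP : P R = ENNReal.ofReal α :=
    prob_compl_ofReal' hTBm h0 (le_trans hαβ.le hβ) hTBP
  set D : Fin 2 → Set Ω := fun i => if i = 0 then B1 else B2 with hDdef
  have hDm : ∀ i, MeasurableSet (D i) := by
    intro i; rw [hDdef]; dsimp only; split <;> assumption
  have hDP : ∀ i, P (D i) = ENNReal.ofReal ((β-α)/2) := by
    intro i; rw [hDdef]; dsimp only; split
    · exact hB1P
    · exact hB2P
  have hDB : ∀ i, D i ⊆ B := by
    intro i; rw [hDdef]; dsimp only; split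
    · exact hB1B
    · exact diff_subset
  set X : Fin 2 → Ω → ℝ := fun i => (D i ∪ T).indicator (fun _ => 1) with hXdef
  have hXval1 : ∀ i ω, ω ∈ D i ∪ T → X i ω = 1 := fun i ω h => indicator_of_mem h _
  have hXval0 : ∀ i ω, ω ∉ D i ∪ T → X i ω = 0 := fun i ω h => indicator_of_notMem h _
  have hX01 : ∀ i ω, 0 ≤ X i ω ∧ X i ω ≤ 1 := by
    intro i ω
    by_cases h : ω ∈ D i ∪ T
    · rw [hXval1 i ω h]; norm_num
    · rw [hXval0 i ω h]; norm_num
  have hXm : ∀ i, Measurable (X i) := fun i =>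
    measurable_const.indicator ((hDm i).union hTm)
  have hmem : ∀ i, MemLinf P (X i) := fun i =>
    ⟨hXm i, 1, ae_of_all _ fun ω => abs_le.2 ⟨by linarith [(hX01 i ω).1], (hX01 i ω).2⟩⟩
  -- per-component CDF
  have hDTdisj : ∀ i, Disjoint (D i) T := fun i =>
    (disjoint_compl_right.mono_right (le_trans (hDB i) hBT)).symm
  have hDTP : ∀ i, P (D i ∪ T) = ENNReal.ofReal (1 - (α+β)/2) := by
    intro i
    rw [measure_union (hDTdisj i) hTm, hDP i, hTP,
      ← ENNReal.ofReal_add (by linarith) (by linarith)]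
    congr 1; ring
  have hDTc : ∀ i, P (D i ∪ T)ᶜ = ENNReal.ofReal ((α+β)/2) := fun i =>
    prob_compl_ofReal' ((hDm i).union hTm) (by linarith) (by linarith) (hDTP i)
  have hcdf1 : ∀ i (x : ℝ), 1 ≤ x → P {ω | X i ω ≤ x} = 1 := by
    intro i x hx
    have : {ω | X i ω ≤ x} = univ := eq_univ_of_forall fun ω => le_trans (hX01 i ω).2 hx
    rw [this, measure_univ]
  have hcdf2 : ∀ i (x : ℝ), x < 1 → P {ω | X i ω ≤ x} ≤ ENNReal.ofReal ((α+β)/2) := by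
    intro i x hx
    rw [← hDTc i]
    refine measure_mono fun ω hω => fun hmem' => ?_
    rw [mem_setOf_eq, hXval1 i ω hmem'] at hω
    linarith
  have hcdf3 : ∀ i (x : ℝ), x < 0 → P {ω | X i ω ≤ x} = 0 := by
    intro i x hx
    have : {ω | X i ω ≤ x} = ∅ := by
      refine eq_empty_of_forall_notMem fun ω hω => ?_
      rw [mem_setOf_eq] at hω
      linarith [(hX01 i ω).1]
    rw [this, measure_empty]
  have hcdf4 : ∀ i (x : ℝ), 0 ≤ x → ENNReal.ofReal ((α+β)/2) ≤ P {ω | X i ω ≤ x} := by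
    intro i x hx
    rw [← hDTc i]
    refine measure_mono fun ω hω => ?_
    rw [mem_setOf_eq, hXval0 i ω hω]
    exact hx
  -- sum facts
  have hSapp : ∀ ω, (∑ i, X i) ω = X 0 ω + X 1 ω := by
    intro ω
    rw [Finset.sum_apply]
    exact Fin.sum_univ_two _
  have hsum_le : ∀ ω, ω ∉ T → (∑ i, X i) ω ≤ 1 := by
    intro ω hω
    rw [hSapp]
    by_cases h1 : ω ∈ B1
    · have h2 : ω ∉ B2 := fun h => h.2 h1
      have : X 1 ω = 0 := hXval0 1 ω (by
        rintro (h | h)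
        · exact h2 (by simpa [hDdef] using h)
        · exact hω h)
      rw [this]
      linarith [(hX01 0 ω).2]
    · have : X 0 ω = 0 := hXval0 0 ω (by
        rintro (h | h)
        · exact h1 (by simpa [hDdef] using h)
        · exact hω h)
      rw [this]
      linarith [(hX01 1 ω).2]
    
  have hsum_ge : ∀ ω, ω ∈ T ∪ B → 1 ≤ (∑ i, X i) ω := by
    intro ω hω
    rw [hSapp]
    rcases hω with hT | hB
    · rw [hXval1 0 ω (Or.inr hT), hXval1 1 ω (Or.inr hT)]; norm_num
    · by_cases h1 : ω ∈ B1
      · rw [hXval1 0 ω (Or.inl (by simpa [hDdef] using h1))]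
        linarith [(hX01 1 ω).1]
      · have h2 : ω ∈ B2 := ⟨hB, h1⟩
        rw [hXval1 1 ω (Or.inl (by simpa [hDdef] using h2))]
        linarith [(hX01 0 ω).1]
  have hsum_gt : ∀ ω, ω ∈ T → (∑ i, X i) ω = 2 := by
    intro ω hT
    rw [hSapp, hXval1 0 ω (Or.inr hT), hXval1 1 ω (Or.inr hT)]
    norm_num
  have hScdf1 : P {ω | (∑ i, X i) ω ≤ 1} = ENNReal.ofReal β := by
    have : {ω | (∑ i, X i) ω ≤ 1} = Tᶜ := by
      ext ω
      simp only [mem_setOf_eq, mem_compl_iff]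
      constructor
      · intro h hT
        rw [hsum_gt ω hT] at h
        linarith
      · exact hsum_le ω
    rw [this, hTc]
  have hScdf2 : ∀ x : ℝ, x < 1 → P {ω | (∑ i, X i) ω ≤ x} ≤ ENNReal.ofReal α := by
    intro x hx
    rw [← hRP]
    refine measure_mono fun ω hω => fun hmem' => ?_
    rw [mem_setOf_eq] at hω
    have := hsum_ge ω hmem'
    linarith
  -- concentration
  have hconc : KConcentrated P X K := by
    intro q hq
    have hq01 := hK hq
    rcases hdich q hq with hqa | hqb
    · obtain ⟨Sq, hSqR, hSqm, hSqP⟩ := hP R hRm (ENNReal.ofReal (α - q))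
        (by rw [hRP]; exact ENNReal.ofReal_le_ofReal (by linarith [hq01.1]))
      refine ⟨(T ∪ B) ∪ Sq, fun i => ⟨⟨hTBm.union hSqm, ∅, measure_empty, ?_⟩, ?_⟩⟩
      · intro ω hω _ ω' hω' _
        have hω'2 : ω' ∉ T ∪ B := fun h => hω' (Or.inl h)
        have : X i ω' = 0 := hXval0 i ω' (by
          rintro (h | h)
          · exact hω'2 (Or.inr (hDB i h))
          · exact hω'2 (Or.inl h))
        rw [this]
        exact (hX01 i ω).1
      · have hdisj : Disjoint (T ∪ B) Sq :=
          disjoint_compl_right.mono_right (le_trans hSqR (le_refl R))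
        rw [measure_union hdisj hSqm, hTBP, hSqP,
          ← ENNReal.ofReal_add (by linarith) (by linarith)]
        congr 1; ring
    · obtain ⟨Aq, hAqT, hAqm, hAqP⟩ := hP T hTm (ENNReal.ofReal (1 - q))
        (by rw [hTP]; exact ENNReal.ofReal_le_ofReal (by linarith [hq01.2]))
      refine ⟨Aq, fun i => ⟨⟨hAqm, ∅, measure_empty, ?_⟩, hAqP⟩⟩
      intro ω hω _ ω' hω' _
      rw [hXval1 i ω (Or.inr (hAqT hω))]
      exact (hX01 i ω').2
  exact ⟨X, hmem, hconc, hcdf1, hcdf2, hcdf3, hcdf4, hScdf1, hScdf2⟩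

lemma left_gap {K : Set ℝ} (hKc : IsClosed K) (hK : K ⊆ Icc 0 1) {p : ℝ} (hp : 0 < p)
    (hno : ¬∃ u : ℕ → ℝ, StrictMono u ∧ (∀ n, u n ∈ K) ∧ Tendsto u atTop (nhds p)) :
    ∃ α, 0 ≤ α ∧ α < p ∧ ∀ q ∈ K, q ≤ α ∨ p ≤ q := by
  by_cases hne : (K ∩ Iio p).Nonempty
  · set a := sSup (K ∩ Iio p) with hadef
    have hbdd : BddAbove (K ∩ Iio p) := ⟨p, fun x hx => hx.2.le⟩
    have haK : a ∈ K := by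
      have h1 := csSup_mem_closure hne hbdd
      have h2 : closure (K ∩ Iio p) ⊆ closure K := closure_mono inter_subset_left
      rw [hKc.closure_eq] at h2
      exact h2 h1
    have ha_le : a ≤ p := csSup_le hne (fun x hx => hx.2.le)
    have ha0 : 0 ≤ a := (hK haK).1
    rcases lt_or_eq_of_le ha_le with hlt | heq
    · refine ⟨a, ha0, hlt, fun q hq => ?_⟩
      by_cases h : q < p
      · exact Or.inl (le_csSup hbdd ⟨hq, h⟩)
      · exact Or.inr (not_lt.1 h)
    · exfalso
      apply hno
      have key : ∀ x : ℝ, x < p → ∃ y, y ∈ K ∧ x < y ∧ y < p := by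
        intro x hx
        obtain ⟨y, hy, hxy⟩ := exists_lt_of_lt_csSup hne (lt_of_lt_of_le hx heq.ge)
        exact ⟨y, hy.1, hxy, hy.2⟩
      have hstep' : ∀ (n : ℕ) (z : {x : ℝ // x ∈ K ∧ x < p}),
          ∃ w : {x : ℝ // x ∈ K ∧ x < p}, max z.1 (p - 1/(n+1)) < w.1 := by
        intro n z
        have hm : max z.1 (p - 1/(n+1)) < p := by
          refine max_lt z.2.2 ?_
          have : (0:ℝ) < 1/((n:ℝ)+1) := by positivity
          linarith
        obtain ⟨y, h1, h2, h3⟩ := key _ hm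
        exact ⟨⟨y, h1, h3⟩, h2⟩
      choose g hg using hstep'
      obtain ⟨y0, hy0K, hy0gt, hy0lt⟩ := key (p-1) (by linarith)
      set v : ℕ → {x : ℝ // x ∈ K ∧ x < p} :=
        fun n => Nat.rec ⟨y0, hy0K, hy0lt⟩ (fun m ih => g (m+1) ih) n with hvdef
      have hv_succ : ∀ n, v (n+1) = g (n+1) (v n) := fun n => rfl
      have hv_lt : ∀ n : ℕ, max (v n).1 (p - 1/((n:ℝ)+1+1)) < (v (n+1)).1 := by
        intro n
        have := hg (n+1) (v n)
        rw [← hv_succ n] at this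
        convert this using 3
        push_cast
        ring
      refine ⟨fun n => (v n).1,
        strictMono_nat_of_lt_succ (fun n => lt_of_le_of_lt (le_max_left _ _) (hv_lt n)),
        fun n => (v n).2.1, ?_⟩
      have hlow : ∀ n : ℕ, p - 1/((n:ℝ)+1) ≤ (v n).1 := by
        intro n
        cases n with
        | zero =>
          have : (v 0).1 = y0 := rfl
          rw [this]
          push_cast
          linarith
        | succ m =>
          have h1 := hv_lt m
          have h2 : p - 1/((m:ℝ)+1+1) ≤ max (v m).1 (p - 1/((m:ℝ)+1+1)) := le_max_right _ _
          have h3 : ((m:ℝ)+1) + 1 = ((m+1 : ℕ) : ℝ) + 1 := by push_cast; ring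
          rw [h3] at h1 h2
          linarith
      have hhi : ∀ n, (v n).1 ≤ p := fun n => (v n).2.2.le
      have h1 : Tendsto (fun n : ℕ => p - 1/((n:ℝ)+1)) atTop (nhds p) := by
        have h2 : Tendsto (fun n : ℕ => p - 1/((n:ℝ)+1)) atTop (nhds (p - 0)) :=
          tendsto_const_nhds.sub tendsto_one_div_add_atTop_nhds_zero_nat
        simpa using h2
      exact tendsto_of_tendsto_of_tendsto_of_le_of_le h1 tendsto_const_nhds hlow hhi
  · refine ⟨0, le_refl 0, hp, fun q hq => Or.inr ?_⟩
    by_contra h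
    exact hne ⟨q, hq, not_le.1 h⟩

lemma right_gap {K : Set ℝ} (hKc : IsClosed K) (hK : K ⊆ Icc 0 1) {p : ℝ} (hp : p < 1)
    (hno : ¬∃ u : ℕ → ℝ, StrictAnti u ∧ (∀ n, u n ∈ K) ∧ Tendsto u atTop (nhds p)) :
    ∃ β, p < β ∧ β ≤ 1 ∧ ∀ q ∈ K, q ≤ p ∨ β ≤ q := by
  by_cases hne : (K ∩ Ioi p).Nonempty
  · set b := sInf (K ∩ Ioi p) with hbdef
    have hbdd : BddBelow (K ∩ Ioi p) := ⟨p, fun x hx => hx.2.le⟩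
    have hbK : b ∈ K := by
      have h1 := csInf_mem_closure hne hbdd
      have h2 : closure (K ∩ Ioi p) ⊆ closure K := closure_mono inter_subset_left
      rw [hKc.closure_eq] at h2
      exact h2 h1
    have hb_ge : p ≤ b := le_csInf hne (fun x hx => hx.2.le)
    have hb1 : b ≤ 1 := (hK hbK).2
    rcases lt_or_eq_of_le hb_ge with hlt | heq
    · refine ⟨b, hlt, hb1, fun q hq => ?_⟩
      by_cases h : p < q
      · exact Or.inr (csInf_le hbdd ⟨hq, h⟩)
      · exact Or.inl (not_lt.1 h)
    · exfalso
      apply hno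
      have key : ∀ x : ℝ, p < x → ∃ y, y ∈ K ∧ y < x ∧ p < y := by
        intro x hx
        obtain ⟨y, hy, hxy⟩ := exists_lt_of_csInf_lt hne (lt_of_le_of_lt heq.ge hx)
        exact ⟨y, hy.1, hxy, hy.2⟩
      have hstep' : ∀ (n : ℕ) (z : {x : ℝ // x ∈ K ∧ p < x}),
          ∃ w : {x : ℝ // x ∈ K ∧ p < x}, w.1 < min z.1 (p + 1/(n+1)) := by
        intro n z
        have hm : p < min z.1 (p + 1/(n+1)) := by
          refine lt_min z.2.2 ?_
          have : (0:ℝ) < 1/((n:ℝ)+1) := by positivity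
          linarith
        obtain ⟨y, h1, h2, h3⟩ := key _ hm
        exact ⟨⟨y, h1, h3⟩, h2⟩
      choose g hg using hstep'
      obtain ⟨y0, hy0K, hy0lt, hy0gt⟩ := key (p+1) (by linarith)
      set v : ℕ → {x : ℝ // x ∈ K ∧ p < x} :=
        fun n => Nat.rec ⟨y0, hy0K, hy0gt⟩ (fun m ih => g (m+1) ih) n with hvdef
      have hv_succ : ∀ n, v (n+1) = g (n+1) (v n) := fun n => rfl
      have hv_lt : ∀ n : ℕ, (v (n+1)).1 < min (v n).1 (p + 1/((n:ℝ)+1+1)) := by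
        intro n
        have := hg (n+1) (v n)
        rw [← hv_succ n] at this
        convert this using 3
        push_cast
        ring
      refine ⟨fun n => (v n).1,
        strictAnti_nat_of_succ_lt (fun n => lt_of_lt_of_le (hv_lt n) (min_le_left _ _)),
        fun n => (v n).2.1, ?_⟩
      have hhiB : ∀ n : ℕ, (v n).1 ≤ p + 1/((n:ℝ)+1) := by
        intro n
        cases n with
        | zero =>
          have : (v 0).1 = y0 := rfl
          rw [this]
          push_cast
          linarith
        | succ m =>
          have h1 := hv_lt m
          have h2 : min (v m).1 (p + 1/((m:ℝ)+1+1)) ≤ p + 1/((m:ℝ)+1+1) := min_le_right _ _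
          have h3 : ((m:ℝ)+1) + 1 = ((m+1 : ℕ) : ℝ) + 1 := by push_cast; ring
          rw [h3] at h1 h2
          linarith
      have hlowB : ∀ n, p ≤ (v n).1 := fun n => (v n).2.2.le
      have h1 : Tendsto (fun n : ℕ => p + 1/((n:ℝ)+1)) atTop (nhds p) := by
        have h2 : Tendsto (fun n : ℕ => p + 1/((n:ℝ)+1)) atTop (nhds (p + 0)) :=
          tendsto_const_nhds.add tendsto_one_div_add_atTop_nhds_zero_nat
        simpa using h2
      exact tendsto_of_tendsto_of_tendsto_of_le_of_le tendsto_const_nhds h1 hlowB hhiB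
  · refine ⟨1, hp, le_refl 1, fun q hq => Or.inl ?_⟩
    by_contra h
    exact hne ⟨q, hq, not_le.1 h⟩

end Main

/-- For closed `K ⊆ [0,1]`: (1) for `p ∈ (0,1]`, `VaR_p` is `K`-additive iff
there is a strictly increasing sequence in `K` converging to `p`; (2) for `p ∈ [0,1)`,
`VaR⁺_p` is `K`-additive iff there is a strictly decreasing sequence in `K` converging
to `p`. -/
theorem stmt_2 {Ω : Type*} [MeasurableSpace Ω] (P : MeasureTheory.Measure Ω)
    [MeasureTheory.IsProbabilityMeasure P] (hP : Atomless P)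
    (K : Set ℝ) (hKc : IsClosed K) (hK : K ⊆ Icc 0 1) :
    (∀ p ∈ Ioc (0:ℝ) 1,
      (KAdditive P K (fun X => leftQuantile P X p) ↔
        ∃ u : ℕ → ℝ, StrictMono u ∧ (∀ n, u n ∈ K) ∧
          Filter.Tendsto u Filter.atTop (nhds p))) ∧
    (∀ p ∈ Ico (0:ℝ) 1,
      (KAdditive P K (fun X => rightQuantile P X p) ↔
        ∃ u : ℕ → ℝ, StrictAnti u ∧ (∀ n, u n ∈ K) ∧
          Filter.Tendsto u Filter.atTop (nhds p))) := by
  constructor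
  · intro p hp
    constructor
    · intro hadd
      by_contra hno
      obtain ⟨α, hα0, hαp, hdich⟩ := left_gap hKc hK hp.1 hno
      obtain ⟨X, hmem, hconc, hcdf1, hcdf2, hcdf3, hcdf4, hScdf1, hScdf2⟩ :=
        construction P hP hK hα0 hαp hp.2 hdich
      have heq := hadd 2 le_rfl X hmem hconc
      have heq2 : leftQuantile P (∑ i, X i) p
          = leftQuantile P (X 0) p + leftQuantile P (X 1) p := by
        simpa [Fin.sum_univ_two] using heq
      have hXq : ∀ i, leftQuantile P (X i) p = 1 := by
        intro i
        have hel : ∀ x ∈ {x : ℝ | ENNReal.ofReal p ≤ P {ω | X i ω ≤ x}}, (1:ℝ) ≤ x := by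
          intro x hx
          by_contra hcon
          push_neg at hcon
          rw [mem_setOf_eq] at hx
          have h2 := le_trans hx (hcdf2 i x hcon)
          have h3 : (α+p)/2 < p := by linarith
          exact absurd (lt_of_le_of_lt h2 ((ENNReal.ofReal_lt_ofReal_iff hp.1).2 h3))
            (lt_irrefl _)
        have hmem1 : (1:ℝ) ∈ {x : ℝ | ENNReal.ofReal p ≤ P {ω | X i ω ≤ x}} := by
          rw [mem_setOf_eq, hcdf1 i 1 le_rfl]
          exact ENNReal.ofReal_le_one.2 hp.2
        exact le_antisymm (csInf_le ⟨1, hel⟩ hmem1) (le_csInf ⟨1, hmem1⟩ hel)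
      have hSq : leftQuantile P (∑ i, X i) p = 1 := by
        have hel : ∀ x ∈ {x : ℝ | ENNReal.ofReal p ≤ P {ω | (∑ i, X i) ω ≤ x}}, (1:ℝ) ≤ x := by
          intro x hx
          by_contra hcon
          push_neg at hcon
          rw [mem_setOf_eq] at hx
          have h2 := le_trans hx (hScdf2 x hcon)
          exact absurd (lt_of_le_of_lt h2 ((ENNReal.ofReal_lt_ofReal_iff hp.1).2 hαp))
            (lt_irrefl _)
        have hmem1 : (1:ℝ) ∈ {x : ℝ | ENNReal.ofReal p ≤ P {ω | (∑ i, X i) ω ≤ x}} := by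
          rw [mem_setOf_eq, hScdf1]
        exact le_antisymm (csInf_le ⟨1, hel⟩ hmem1) (le_csInf ⟨1, hmem1⟩ hel)
      rw [hSq, hXq 0, hXq 1] at heq2
      norm_num at heq2
    · rintro ⟨u, hu1, hu2, hu3⟩
      exact kadd_left P hK hp hu1 hu2 hu3
  · intro p hp
    constructor
    · intro hadd
      by_contra hno
      obtain ⟨β, hpβ, hβ1, hdich⟩ := right_gap hKc hK hp.2 hno
      obtain ⟨X, hmem, hconc, hcdf1, hcdf2, hcdf3, hcdf4, hScdf1, hScdf2⟩ :=
        construction P hP hK hp.1 hpβ hβ1 hdich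
      have heq := hadd 2 le_rfl X hmem hconc
      have heq2 : rightQuantile P (∑ i, X i) p
          = rightQuantile P (X 0) p + rightQuantile P (X 1) p := by
        simpa [Fin.sum_univ_two] using heq
      have hXq : ∀ i, rightQuantile P (X i) p = 0 := by
        intro i
        have hel : ∀ x ∈ {x : ℝ | ENNReal.ofReal p < P {ω | X i ω ≤ x}}, (0:ℝ) ≤ x := by
          intro x hx
          by_contra hcon
          push_neg at hcon
          rw [mem_setOf_eq, hcdf3 i x hcon] at hx
          exact absurd hx (by simp)
        have hmem0 : (0:ℝ) ∈ {x : ℝ | ENNReal.ofReal p < P {ω | X i ω ≤ x}} := by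
          rw [mem_setOf_eq]
          refine lt_of_lt_of_le ?_ (hcdf4 i 0 le_rfl)
          exact (ENNReal.ofReal_lt_ofReal_iff (by linarith [hp.1])).2 (by linarith [hp.1])
        exact le_antisymm (csInf_le ⟨0, hel⟩ hmem0) (le_csInf ⟨0, hmem0⟩ hel)
      have hSq : rightQuantile P (∑ i, X i) p = 1 := by
        have hel : ∀ x ∈ {x : ℝ | ENNReal.ofReal p < P {ω | (∑ i, X i) ω ≤ x}}, (1:ℝ) ≤ x := by
          intro x hx
          by_contra hcon
          push_neg at hcon
          rw [mem_setOf_eq] at hx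
          exact absurd (lt_of_lt_of_le hx (hScdf2 x hcon)) (lt_irrefl _)
        have hmem1 : (1:ℝ) ∈ {x : ℝ | ENNReal.ofReal p < P {ω | (∑ i, X i) ω ≤ x}} := by
          rw [mem_setOf_eq, hScdf1]
          exact (ENNReal.ofReal_lt_ofReal_iff (by linarith [hp.1])).2 hpβ
        exact le_antisymm (csInf_le ⟨1, hel⟩ hmem1) (le_csInf ⟨1, hmem1⟩ hel)
      rw [hSq, hXq 0, hXq 1] at heq2
      norm_num at heq2
    · rintro ⟨u, hu1, hu2, hu3⟩
      exact kadd_right P hK hp hu1 hu2 hu3
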